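/- The subset {(y₁ + y₂, x² + y₁·y₂, x·(y₁ − y₂)) : x, y₁, y₂ ∈ ℝ with y₁·y₂ = 0} of ℝ³ equals the Whitney umbrella W = {(a,b,c) ∈ ℝ³ : 0 ≤ b and a²·b = c²}. -/
import Mathlib

/-- The locus in `Z₂ ≅ ℝ³` where at least one of the two points is real equals the
Whitney umbrella `W = {(a,b,c) : 0 ≤ b, a²b = c²}`. -/
theorem whitney_umbrella_param :
    {p : ℝ × ℝ × ℝ | ∃ x y₁ y₂ : ℝ, y₁ * y₂ = 0 ∧
        p = (y₁ + y₂, x ^ 2 + y₁ * y₂, x * (y₁ - y₂))} =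
      {p : ℝ × ℝ × ℝ | 0 ≤ p.2.1 ∧ p.1 ^ 2 * p.2.1 = p.2.2 ^ 2} := by
  ext ⟨a, b, c⟩
  simp only [Set.mem_setOf_eq, Prod.mk.injEq]
  constructor
  · rintro ⟨x, y₁, y₂, h, rfl, rfl, rfl⟩
    rcases mul_eq_zero.mp h with rfl | rfl <;>
      exact ⟨by positivity, by ring⟩
  · rintro ⟨hb, h⟩
    have hx : Real.sqrt b ^ 2 = b := Real.sq_sqrt hb
    have : (c - a * Real.sqrt b) * (c + a * Real.sqrt b) = 0 := by nlinarith
    rcases mul_eq_zero.mp this with h0 | h0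
    · exact ⟨Real.sqrt b, a, 0, by ring, by ring, by linarith, by linarith⟩
    · exact ⟨Real.sqrt b, 0, a, by ring, by ring, by linarith, by linarith⟩
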